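/- Suppose $A$ is a connection on a principal $G$-bundle over $W_3 = {\Bbb R}_y \times C$ ($C$ a Riemann surface) and $\upphi$ an adjoint-valued function satisfying the Bogomolny equations $F = \star\,{\mathrm d}_A \upphi$. Then the $(0,1)$ part of the covariant derivative along $C$ satisfies $[D_y - i\upphi, \overline\partial_A] = 0$; consequently the holomorphic structure induced by $\overline\partial_A$ on the restriction $E_y \to \{y\}\times C$ is independent of $y$ up to complex gauge transformation. -/

import Mathlib

/-!
STATEMENT 4.  Bogomolny equations on `W₃ = ℝ_y × C` (with `C = ℂ`, in a local
trivialization, the fields being matrix-valued, here valued in a normed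
`ℂ`-algebra `𝔄`) imply the operator identity `[D_y - iφ, ∂̄_A] = 0`, formalized as
the vanishing of the multiplication operator
`F_{y z̄} - i D_{z̄} φ = ∂_y A_{z̄} - ∂_{z̄} A_y + [A_y, A_{z̄}] - i (∂_{z̄} φ + [A_{z̄}, φ])`,
where `A_{z̄} = ½(A₁ + i A₂)` and `∂_{z̄} = ½(∂₁ + i ∂₂)`.  Consequently the
holomorphic structure `∂̄_A` on `E_y → {y} × C` is independent of `y` up to the
complex gauge transformation generated by `D_y - iφ`.

A point of `ℝ × ℂ` is `(y, z)` with `z = x₁ + i x₂`; `Dv v f` is the directional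
derivative along `v`. -/

noncomputable def Dv {𝔄 : Type*} [NormedRing 𝔄] [NormedAlgebra ℂ 𝔄]
    (v : ℝ × ℂ) (f : ℝ × ℂ → 𝔄) (x : ℝ × ℂ) : 𝔄 :=
  fderiv ℝ f x v

theorem bogomolny_implies_dbar_commutes
    {𝔄 : Type*} [NormedRing 𝔄] [NormedAlgebra ℂ 𝔄]
    (Ay A1 A2 φ : ℝ × ℂ → 𝔄)
    (hAy : Differentiable ℝ Ay) (hA1 : Differentiable ℝ A1)
    (hA2 : Differentiable ℝ A2) (hφ : Differentiable ℝ φ)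
    -- the Bogomolny equations `F = ⋆ d_A φ` in components:
    -- `F_{y1} = -D₂φ`, `F_{y2} = D₁φ`, `F_{12} = D_y φ`
    (h1 : ∀ x, Dv (1, 0) A1 x - Dv (0, 1) Ay x + ⁅Ay x, A1 x⁆
            = -(Dv (0, Complex.I) φ x + ⁅A2 x, φ x⁆))
    (h2 : ∀ x, Dv (1, 0) A2 x - Dv (0, Complex.I) Ay x + ⁅Ay x, A2 x⁆
            = Dv (0, 1) φ x + ⁅A1 x, φ x⁆)
    (h3 : ∀ x, Dv (0, 1) A2 x - Dv (0, Complex.I) A1 x + ⁅A1 x, A2 x⁆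
            = Dv (1, 0) φ x + ⁅Ay x, φ x⁆) :
    letI Azb : ℝ × ℂ → 𝔄 := fun x => (2 : ℂ)⁻¹ • (A1 x + Complex.I • A2 x)
    ∀ x, Dv (1, 0) Azb x - ((2 : ℂ)⁻¹ • (Dv (0, 1) Ay x + Complex.I • Dv (0, Complex.I) Ay x))
          + ⁅Ay x, Azb x⁆
          - Complex.I • ((2 : ℂ)⁻¹ • (Dv (0, 1) φ x + Complex.I • Dv (0, Complex.I) φ x)
              + ⁅Azb x, φ x⁆) = 0 := by
  intro x
  beta_reduce
  have hI2 : Differentiable ℝ (fun x => Complex.I • A2 x) := hA2.const_smul Complex.I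
  have hsum : Differentiable ℝ (fun x => A1 x + Complex.I • A2 x) := hA1.add hI2
  have hDz : Dv (1,0) (fun x => (2:ℂ)⁻¹ • (A1 x + Complex.I • A2 x)) x
      = (2:ℂ)⁻¹ • (Dv (1,0) A1 x + Complex.I • Dv (1,0) A2 x) := by
    show fderiv ℝ (fun x => (2:ℂ)⁻¹ • (A1 x + Complex.I • A2 x)) x (1,0) = _
    rw [fderiv_fun_const_smul (hsum x), fderiv_fun_add (hA1 x) (hI2 x),
        fderiv_fun_const_smul (hA2 x)]
    rfl
  have e1 : Dv (1,0) A1 x = Dv (0, 1) Ay x - ⁅Ay x, A1 x⁆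
      - (Dv (0, Complex.I) φ x + ⁅A2 x, φ x⁆) := by
    linear_combination (norm := abel) h1 x
  have e2 : Dv (1,0) A2 x = Dv (0, Complex.I) Ay x - ⁅Ay x, A2 x⁆
      + (Dv (0, 1) φ x + ⁅A1 x, φ x⁆) := by
    linear_combination (norm := abel) h2 x
  rw [hDz, e1, e2]
  simp only [Ring.lie_def, smul_add, mul_add, add_mul, mul_smul_comm, smul_mul_assoc,
    smul_sub, sub_mul, mul_sub, smul_smul]
  match_scalars <;> (first | ring1 | (ring_nf; rw [Complex.I_sq]; ring1))
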